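/- Let d ≥ 2 and n = 2, and let f be a unanimous, group-strategyproof mechanism for 2 agents in ℝ^d. Then for every profile (x_1, x_2), the support of f(x_1, x_2) is contained in the closed segment [x_1, x_2]. -/

import Mathlib

open MeasureTheory ENNReal

noncomputable section

/-- Points in `d`-dimensional Euclidean space. -/
abbrev Pt (d : ℕ) : Type := EuclideanSpace ℝ (Fin d)

/-- A (randomized) mechanism: each profile is mapped to a Borel probability measure
with finite first moment. -/
def IsMechanism {d n : ℕ} (f : (Fin n → Pt d) → Measure (Pt d)) : Prop :=
  ∀ x, IsProbabilityMeasure (f x) ∧ Integrable (fun y => y) (f x)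

/-- Unanimity: if all agents report `z`, the output is the Dirac measure at `z`. -/
def Unanimous {d n : ℕ} (f : (Fin n → Pt d) → Measure (Pt d)) : Prop :=
  ∀ z : Pt d, f (fun _ => z) = Measure.dirac z

/-- Group-strategyproofness: for every profile, nonempty coalition, and deviation by
the coalition, some member of the coalition does not strictly gain. -/
def GroupStrategyproof {d n : ℕ} (f : (Fin n → Pt d) → Measure (Pt d)) : Prop :=
  ∀ x x' : Fin n → Pt d, ∀ S : Finset (Fin n), S.Nonempty →
    (∀ i ∉ S, x' i = x i) →
    ∃ i ∈ S, ∫ y, ‖y - x i‖ ∂(f x') ≥ ∫ y, ‖y - x i‖ ∂(f x)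

/-- The support of a measure: the set of points all of whose neighborhoods have
positive measure (the smallest closed set of full measure). -/
def msupport {α : Type*} [TopologicalSpace α] [MeasurableSpace α] (P : Measure α) : Set α :=
  {y | ∀ U ∈ nhds y, P U ≠ 0}

set_option maxHeartbeats 1000000 in
/-- For `d ≥ 2` and `n = 2`, every unanimous, group-strategyproof mechanism always
outputs a distribution supported on the segment between the two agents. -/
theorem two_agents_output_on_segment {d : ℕ} (hd : 2 ≤ d)
    (f : (Fin 2 → Pt d) → Measure (Pt d))
    (hmech : IsMechanism f)
    (huna : Unanimous f)
    (hgsp : GroupStrategyproof f) :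
    ∀ x : Fin 2 → Pt d, msupport (f x) ⊆ segment ℝ (x 0) (x 1) := by
  intro x
  set a := x 0 with ha
  set b := x 1 with hb
  set μ := f x with hμ
  obtain ⟨hprob, hint⟩ := hmech x
  set D : ℝ := dist a b with hD
  -- integrability of distance functions
  have hinta : Integrable (fun y => ‖y - a‖) μ :=
    (hint.sub (integrable_const a)).norm
  have hintb : Integrable (fun y => ‖y - b‖) μ :=
    (hint.sub (integrable_const b)).norm
  set c1 : ℝ := ∫ y, ‖y - a‖ ∂μ with hc1
  set c2 : ℝ := ∫ y, ‖y - b‖ ∂μ with hc2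
  have hc1nn : 0 ≤ c1 := integral_nonneg fun y => norm_nonneg _
  have hc2nn : 0 ≤ c2 := integral_nonneg fun y => norm_nonneg _
  -- triangle comparisons between costs
  have htri12 : c1 ≤ c2 + D := by
    have hmono : (fun y => ‖y - a‖) ≤ᵐ[μ] fun y => ‖y - b‖ + D := by
      filter_upwards with y
      calc ‖y - a‖ = dist y a := (dist_eq_norm y a).symm
        _ ≤ dist y b + dist b a := dist_triangle y b a
        _ = ‖y - b‖ + D := by rw [dist_eq_norm, dist_comm b a]
    calc c1 ≤ ∫ y, (‖y - b‖ + D) ∂μ :=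
          integral_mono_ae hinta (hintb.add (integrable_const D)) hmono
      _ = c2 + D := by
          rw [integral_add hintb (integrable_const D), integral_const, probReal_univ]
          simp
          rfl
  have htri21 : c2 ≤ c1 + D := by
    have hmono : (fun y => ‖y - b‖) ≤ᵐ[μ] fun y => ‖y - a‖ + D := by
      filter_upwards with y
      calc ‖y - b‖ = dist y b := (dist_eq_norm y b).symm
        _ ≤ dist y a + dist a b := dist_triangle y a b
        _ = ‖y - a‖ + D := by rw [dist_eq_norm]
    calc c2 ≤ ∫ y, (‖y - a‖ + D) ∂μ :=
          integral_mono_ae hintb (hinta.add (integrable_const D)) hmono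
      _ = c1 + D := by
          rw [integral_add hinta (integrable_const D), integral_const, probReal_univ]
          simp
          rfl
  -- key step: c1 + c2 ≤ D
  have hkey : c1 + c2 ≤ D := by
    by_contra hlt
    push_neg at hlt
    have hc1pos : 0 < c1 := by nlinarith
    have hc2pos : 0 < c2 := by nlinarith
    have hspos : 0 < c1 + c2 := by linarith
    set t : ℝ := c1 / (c1 + c2) with ht
    set z : Pt d := a + t • (b - a) with hz
    obtain ⟨i, _, hi⟩ := hgsp x (fun _ => z) Finset.univ ⟨0, Finset.mem_univ 0⟩
      (fun i hi => absurd (Finset.mem_univ i) hi)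
    rw [huna z] at hi
    have hmeas : ∀ w : Pt d, Measurable (fun y : Pt d => ‖y - w‖) := fun w =>
      (continuous_id.sub continuous_const).norm.measurable
    rw [integral_dirac' _ z ((hmeas (x i)).stronglyMeasurable)] at hi
    have hza : ‖z - a‖ = t * D := by
      rw [hz]
      simp only [add_sub_cancel_left, norm_smul]
      rw [Real.norm_eq_abs, abs_of_nonneg (le_of_lt (div_pos hc1pos hspos)), hD,
        dist_eq_norm, norm_sub_rev]
    have hzb : ‖z - b‖ = (1 - t) * D := by
      have : z - b = (1 - t) • (a - b) := by
        rw [hz]; module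
      rw [this, norm_smul, Real.norm_eq_abs, hD, dist_eq_norm]
      have htle : t ≤ 1 := by
        rw [ht, div_le_one hspos]; linarith
      rw [abs_of_nonneg (by linarith : (0:ℝ) ≤ 1 - t)]
    have hlt1 : t * D < c1 := by
      rw [ht, div_mul_eq_mul_div, div_lt_iff₀ hspos]
      have : (0:ℝ) ≤ D := dist_nonneg
      nlinarith
    have hlt2 : (1 - t) * D < c2 := by
      have h1t : 1 - t = c2 / (c1 + c2) := by
        rw [ht]; field_simp; ring
      rw [h1t, div_mul_eq_mul_div, div_lt_iff₀ hspos]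
      have : (0:ℝ) ≤ D := dist_nonneg
      nlinarith
    fin_cases i
    · have h : c1 ≤ ‖z - a‖ := hi
      rw [hza] at h; linarith
    · have h : c2 ≤ ‖z - b‖ := hi
      rw [hzb] at h; linarith
  -- the nonnegative function ‖y-a‖+‖y-b‖-D has nonpositive integral, hence is 0 a.e.
  have hintg : Integrable (fun y => ‖y - a‖ + ‖y - b‖ - D) μ :=
    (hinta.add hintb).sub (integrable_const D)
  have hgnn : ∀ y : Pt d, 0 ≤ ‖y - a‖ + ‖y - b‖ - D := by
    intro y
    have : D ≤ ‖y - a‖ + ‖y - b‖ := by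
      calc D = dist a b := rfl
        _ ≤ dist a y + dist y b := dist_triangle a y b
        _ = ‖y - a‖ + ‖y - b‖ := by rw [dist_eq_norm, dist_eq_norm, norm_sub_rev a y]
    linarith
  have hintval : ∫ y, (‖y - a‖ + ‖y - b‖ - D) ∂μ = c1 + c2 - D := by
    have h1 : Integrable (fun y => ‖y - a‖ + ‖y - b‖) μ := hinta.add hintb
    rw [integral_sub h1 (integrable_const D),
      integral_add hinta hintb, integral_const, probReal_univ]
    simp
    rfl
  have hzero : ∫ y, (‖y - a‖ + ‖y - b‖ - D) ∂μ = 0 := by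
    have hge : 0 ≤ ∫ y, (‖y - a‖ + ‖y - b‖ - D) ∂μ := integral_nonneg hgnn
    rw [hintval] at hge ⊢
    linarith
  have haezero : (fun y => ‖y - a‖ + ‖y - b‖ - D) =ᵐ[μ] 0 :=
    (integral_eq_zero_iff_of_nonneg hgnn hintg).mp hzero
  -- a.e. y lies on the segment
  have haeseg : ∀ᵐ y ∂μ, y ∈ segment ℝ a b := by
    filter_upwards [haezero] with y hy
    have heq : dist a y + dist y b = dist a b := by
      simp only [Pi.zero_apply] at hy
      rw [dist_eq_norm, dist_eq_norm, norm_sub_rev a y]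
      linarith
    rw [mem_segment_iff_wbtw]
    exact dist_add_dist_eq_iff.mp heq
  -- segment is closed
  have hclosed : IsClosed (segment ℝ a b) := by
    rw [segment_eq_image]
    exact (isCompact_Icc.image (by continuity)).isClosed
  have hcompl : μ (segment ℝ a b)ᶜ = 0 := ae_iff.mp haeseg
  intro y hy
  by_contra hyseg
  exact hy ((segment ℝ a b)ᶜ) (hclosed.isOpen_compl.mem_nhds hyseg) hcompl
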